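/- Let p ≥ 5 be prime and choose r with 1 ≤ r ≤ p−1 such that 24r+1 is a quadratic nonresidue modulo p. Then for all n ≥ 0, f_Â(pn + r) ≡ 0 (mod 3). -/

import Mathlib

open scoped Classical

open Finset

namespace Franklin

/-- The staircase length of a finite set of naturals: the number of consecutive values
present starting from the top. -/
noncomputable def stair (S : Finset ℕ) : ℕ := sInf {k | S.sup id - k ∉ S}

/-- Franklin's involution on partitions into distinct parts, encoded as finsets. -/
noncomputable def frank (S : Finset ℕ) : Finset ℕ :=
  if h : S.Nonempty then
    if S.min' h ≤ stair S then
      insert (S.max' h + 1) ((S.erase (S.min' h)).erase (S.max' h + 1 - S.min' h))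
    else insert (stair S) (insert (S.max' h - stair S) (S.erase (S.max' h)))
  else S

lemma sup_id_eq_max' (S : Finset ℕ) (h : S.Nonempty) : S.sup id = S.max' h := by
  rw [Finset.max'_eq_sup']; exact (Finset.sup'_eq_sup h id).symm

lemma frank_eq_case1 (S : Finset ℕ) (hne : S.Nonempty) (h : S.min' hne ≤ stair S) :
    frank S = insert (S.max' hne + 1)
      ((S.erase (S.min' hne)).erase (S.max' hne + 1 - S.min' hne)) := by
  unfold frank; rw [dif_pos hne, if_pos h]

lemma frank_eq_case2 (S : Finset ℕ) (hne : S.Nonempty) (h : ¬ S.min' hne ≤ stair S) :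
    frank S = insert (stair S) (insert (S.max' hne - stair S) (S.erase (S.max' hne))) := by
  unfold frank; rw [dif_pos hne, if_neg h]

lemma stair_le {S : Finset ℕ} {a k : ℕ} (ha : S.sup id = a) (hnot : a - k ∉ S) :
    stair S ≤ k :=
  Nat.sInf_le (by simp only [Set.mem_setOf_eq, ha]; exact hnot)

lemma stair_not_mem {S : Finset ℕ} {a : ℕ} (ha : S.sup id = a) (h0 : 0 ∉ S) :
    a - stair S ∉ S := by
  have hnonempty : {j | S.sup id - j ∉ S}.Nonempty :=
    ⟨S.sup id, by simp only [Set.mem_setOf_eq, Nat.sub_self]; exact h0⟩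
  rw [← ha]
  exact Nat.sInf_mem hnonempty

lemma lt_stair_mem {S : Finset ℕ} {a i : ℕ} (ha : S.sup id = a) (hi : i < stair S) :
    a - i ∈ S := by
  have h1 : i < sInf {j | S.sup id - j ∉ S} := hi
  have h2 := Nat.notMem_of_lt_sInf h1
  simp only [Set.mem_setOf_eq, ha] at h2
  exact not_not.mp h2

lemma le_stair {S : Finset ℕ} {a k : ℕ} (ha : S.sup id = a) (h0 : 0 ∉ S)
    (hmem : ∀ i, i < k → a - i ∈ S) : k ≤ stair S := by
  by_contra h
  push_neg at h
  exact stair_not_mem ha h0 (hmem _ h)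

lemma stair_eq {S : Finset ℕ} {a k : ℕ} (ha : S.sup id = a) (h0 : 0 ∉ S)
    (hmem : ∀ i, i < k → a - i ∈ S) (hnot : a - k ∉ S) : stair S = k :=
  le_antisymm (stair_le ha hnot) (le_stair ha h0 hmem)

lemma eq_Icc {S : Finset ℕ} {s a t : ℕ}
    (hmin : ∀ x ∈ S, s ≤ x) (hmax : ∀ x ∈ S, x ≤ a)
    (hmem : ∀ i, i < t → a - i ∈ S) (h : s + t = a + 1) : S = Finset.Icc s a := by
  ext x
  simp only [Finset.mem_Icc]
  constructor
  · exact fun hx => ⟨hmin x hx, hmax x hx⟩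
  · rintro ⟨h1, h2⟩
    have hx : a - (a - x) = x := by omega
    rw [← hx]
    exact hmem _ (by omega)

lemma sum_val (T : Finset ℕ) : T.val.sum = ∑ i ∈ T, i := by
  rw [Finset.sum_eq_multiset_sum, Multiset.map_id']

lemma range_Icc_sum (u v : ℕ) (h : u ≤ v + 1) :
    (∑ i ∈ Finset.range u, i) + ∑ i ∈ Finset.Icc u v, i = ∑ i ∈ Finset.range (v+1), i := by
  rw [Finset.range_eq_Ico, ← Finset.Ico_add_one_right_eq_Icc,
    Finset.sum_Ico_consecutive _ (Nat.zero_le u) h, ← Finset.range_eq_Ico]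

lemma sq_case1 {s M : ℕ} (hs : 1 ≤ s) (hM : ∑ i ∈ Finset.Icc s (2*s-1), i = M) :
    ∃ x : ℕ, x ^ 2 = 24 * M + 1 := by
  obtain ⟨w, rfl⟩ := Nat.exists_eq_add_of_le hs
  refine ⟨6*w+5, ?_⟩
  have h1 : 2*(1+w)-1 = 2*w+1 := by omega
  rw [h1] at hM
  have hC := range_Icc_sum (1+w) (2*w+1) (by omega)
  rw [hM] at hC
  have hA : (∑ i ∈ Finset.range (1+w), i) * 2 = (1+w) * w := by
    have h := Finset.sum_range_id_mul_two (1+w)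
    have h' : (1+w) - 1 = w := by omega
    rw [h'] at h
    exact h
  have hB : (∑ i ∈ Finset.range (2*w+1+1), i) * 2 = (2*w+2) * (2*w+1) := by
    have h := Finset.sum_range_id_mul_two (2*w+1+1)
    have h' : (2*w+1+1) - 1 = 2*w+1 := by omega
    have h'' : 2*w+1+1 = 2*w+2 := by omega
    rw [h', h''] at h
    exact h
  set P := ∑ i ∈ Finset.range (1+w), i with hP
  set Q := ∑ i ∈ Finset.range (2*w+1+1), i with hQ
  have hA' : (P : ℤ) * 2 = (1+w) * w := by exact_mod_cast hA
  have hB' : (Q : ℤ) * 2 = (2*w+2) * (2*w+1) := by exact_mod_cast hB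
  have hC' : (P : ℤ) + M = Q := by exact_mod_cast hC
  have key : ((6*w+5 : ℕ) : ℤ) ^ 2 = 24 * (M : ℤ) + 1 := by
    push_cast
    nlinarith [hA', hB', hC']
  exact_mod_cast key

lemma sq_case2 {t M : ℕ} (ht : 1 ≤ t) (hM : ∑ i ∈ Finset.Icc (t+1) (2*t), i = M) :
    ∃ x : ℕ, x ^ 2 = 24 * M + 1 := by
  refine ⟨6*t+1, ?_⟩
  have hC := range_Icc_sum (t+1) (2*t) (by omega)
  rw [hM] at hC
  have hA : (∑ i ∈ Finset.range (t+1), i) * 2 = (t+1) * t := by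
    have h := Finset.sum_range_id_mul_two (t+1)
    have h' : (t+1) - 1 = t := by omega
    rw [h'] at h
    exact h
  have hB : (∑ i ∈ Finset.range (2*t+1), i) * 2 = (2*t+1) * (2*t) := by
    have h := Finset.sum_range_id_mul_two (2*t+1)
    have h' : (2*t+1) - 1 = 2*t := by omega
    rw [h'] at h
    exact h
  set P := ∑ i ∈ Finset.range (t+1), i with hP
  set Q := ∑ i ∈ Finset.range (2*t+1), i with hQ
  have hA' : (P : ℤ) * 2 = (t+1) * t := by exact_mod_cast hA
  have hB' : (Q : ℤ) * 2 = (2*t+1) * (2*t) := by exact_mod_cast hB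
  have hC' : (P : ℤ) + M = Q := by exact_mod_cast hC
  have key : ((6*t+1 : ℕ) : ℤ) ^ 2 = 24 * (M : ℤ) + 1 := by
    push_cast
    nlinarith [hA', hB', hC']
  exact_mod_cast key

lemma frank_spec (S : Finset ℕ) (hne : S.Nonempty) (h0 : 0 ∉ S)
    (hsq : ¬ ∃ x : ℕ, x ^ 2 = 24 * (∑ i ∈ S, i) + 1) :
    0 ∉ frank S ∧ (∑ i ∈ frank S, i) = (∑ i ∈ S, i) ∧
      ((frank S).card + 1 = S.card ∨ S.card + 1 = (frank S).card) ∧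
      frank (frank S) = S := by
  have hsup : S.sup id = S.max' hne := sup_id_eq_max' S hne
  set a := S.max' hne with ha_def
  set s := S.min' hne with hs_def
  have haS : a ∈ S := S.max'_mem hne
  have hsS : s ∈ S := S.min'_mem hne
  have hmax : ∀ x ∈ S, x ≤ a := fun x hx => S.le_max' x hx
  have hmin : ∀ x ∈ S, s ≤ x := fun x hx => S.min'_le x hx
  have hs1 : 1 ≤ s := Nat.pos_of_ne_zero (fun e => h0 (e ▸ hsS))
  have hsa : s ≤ a := hmax s hsS
  set t := stair S with ht_def
  have htnot : a - t ∉ S := stair_not_mem hsup h0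
  have htmem : ∀ i, i < t → a - i ∈ S := fun i hi => lt_stair_mem hsup hi
  have ht1 : 1 ≤ t := by
    by_contra hc
    push_neg at hc
    have h00 : t = 0 := by omega
    rw [h00, Nat.sub_zero] at htnot
    exact htnot haS
  have hta : t ≤ a := stair_le hsup (by simpa using h0)
  have hst : s + t ≤ a + 1 := by
    have h1 : a - (t-1) ∈ S := htmem (t-1) (by omega)
    have := hmin _ h1
    omega
  rcases le_or_gt s t with hcase | hcase
  · -- Case 1 : smallest part ≤ staircase
    have h2s : 2 * s ≤ a := by
      by_contra hc
      push_neg at hc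
      have hIcc : S = Finset.Icc s a := eq_Icc hmin hmax htmem (by omega)
      refine hsq (sq_case1 hs1 ?_)
      rw [show 2*s-1 = a by omega, ← hIcc]
    set b := a + 1 - s with hb_def
    have hbS : b ∈ S := by
      have h1 : a - (s-1) ∈ S := htmem (s-1) (by omega)
      have hb : b = a - (s - 1) := by omega
      rwa [hb]
    have hsb : s < b := by omega
    have hba : b ≤ a := by omega
    have haS1 : a + 1 ∉ S := fun hc => by have := hmax _ hc; omega
    set T := (S.erase s).erase b with hT_def
    have hmemT : ∀ x, x ∈ T ↔ x ∈ S ∧ x ≠ s ∧ x ≠ b := by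
      intro x
      rw [hT_def]
      simp only [Finset.mem_erase]
      tauto
    have hnotT : a + 1 ∉ T := fun h => haS1 ((hmemT _).1 h).1
    have hfr : frank S = insert (a+1) T := by
      rw [frank_eq_case1 S hne (by rw [← hs_def, ← ht_def]; exact hcase),
        ← ha_def, ← hs_def, ← hb_def, ← hT_def]
    set S₁ := insert (a+1) T with hS1_def
    have hS1ne : S₁.Nonempty := ⟨a+1, Finset.mem_insert_self _ _⟩
    have hmemS1 : ∀ x, x ∈ S₁ ↔ x = a + 1 ∨ (x ∈ S ∧ x ≠ s ∧ x ≠ b) := by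
      intro x
      rw [hS1_def, Finset.mem_insert]
      constructor
      · rintro (h | h)
        · exact Or.inl h
        · exact Or.inr ((hmemT _).1 h)
      · rintro (h | h)
        · exact Or.inl h
        · exact Or.inr ((hmemT _).2 h)
    have h01 : 0 ∉ S₁ := by
      intro h
      rcases (hmemS1 0).1 h with h | h
      · omega
      · exact h0 h.1
    have hsum1 : ∑ i ∈ S₁, i = ∑ i ∈ S, i := by
      have e1 : ∑ i ∈ S₁, i = (a+1) + ∑ i ∈ T, i := Finset.sum_insert hnotT
      have e2 : (∑ i ∈ T, i) + b = ∑ i ∈ S.erase s, i := by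
        rw [hT_def]
        exact Finset.sum_erase_add _ _ (Finset.mem_erase.2 ⟨by omega, hbS⟩)
      have e3 : (∑ i ∈ S.erase s, i) + s = ∑ i ∈ S, i := Finset.sum_erase_add _ _ hsS
      omega
    have hcard1 : S₁.card + 1 = S.card := by
      have c0 : 2 ≤ S.card := Finset.one_lt_card.2 ⟨s, hsS, b, hbS, by omega⟩
      have c1 : S₁.card = T.card + 1 := Finset.card_insert_of_notMem hnotT
      have c2 : T.card = (S.erase s).card - 1 := by
        rw [hT_def]; exact Finset.card_erase_of_mem (Finset.mem_erase.2 ⟨by omega, hbS⟩)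
      have c3 : (S.erase s).card = S.card - 1 := Finset.card_erase_of_mem hsS
      omega
    have hmax1 : S₁.max' hS1ne = a + 1 := by
      refine le_antisymm (Finset.max'_le _ _ _ ?_) (Finset.le_max' _ _ (Finset.mem_insert_self _ _))
      intro x hx
      rcases (hmemS1 x).1 hx with h | h
      · omega
      · have := hmax _ h.1; omega
    have hsup1 : S₁.sup id = a + 1 := by rw [sup_id_eq_max' _ hS1ne, hmax1]
    have hmin1 : s < S₁.min' hS1ne := by
      have hm := S₁.min'_mem hS1ne
      rcases (hmemS1 _).1 hm with h | h
      · omega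
      · rcases h with ⟨h1, h2, -⟩
        have := hmin _ h1
        omega
    have hstair1 : stair S₁ = s := by
      refine stair_eq hsup1 h01 ?_ ?_
      · intro i hi
        rcases Nat.eq_zero_or_pos i with h | h
        · subst h
          simpa using (hmemS1 (a+1)).2 (Or.inl rfl)
        · have hx : a + 1 - i = a - (i - 1) := by omega
          rw [hx]
          have hxS : a - (i-1) ∈ S := htmem (i-1) (by omega)
          have hxlb : b < a - (i-1) := by omega
          exact (hmemS1 _).2 (Or.inr ⟨hxS, by omega, by omega⟩)
      · rw [show a + 1 - s = b by omega]
        intro hc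
        rcases (hmemS1 b).1 hc with h | h
        · omega
        · exact h.2.2 rfl
    have hfr1 : frank S₁ = S := by
      rw [frank_eq_case2 S₁ hS1ne (by rw [hstair1]; omega), hstair1, hmax1,
        hS1_def, Finset.erase_insert hnotT, show a + 1 - s = b by omega, hT_def,
        Finset.insert_erase (Finset.mem_erase.2 ⟨by omega, hbS⟩), Finset.insert_erase hsS]
    rw [hfr]
    exact ⟨h01, hsum1, Or.inl hcard1, hfr1⟩
  · -- Case 2 : staircase < smallest part
    have h2t : 2 * t + 1 ≤ a := by
      by_contra hc
      push_neg at hc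
      have hIcc : S = Finset.Icc s a := eq_Icc hmin hmax htmem (by omega)
      refine hsq (sq_case2 ht1 ?_)
      rw [show t+1 = s by omega, show 2*t = a by omega, ← hIcc]
    have hatT : t < a - t := by omega
    have htS : t ∉ S := fun h => by have := hmin _ h; omega
    set S₂ := insert t (insert (a-t) (S.erase a)) with hS2_def
    have ht_not : t ∉ insert (a-t) (S.erase a) := by
      simp only [Finset.mem_insert, Finset.mem_erase]
      push_neg
      exact ⟨by omega, fun _ => htS⟩
    have hat_not : a - t ∉ S.erase a := fun h => htnot (Finset.mem_of_mem_erase h)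
    have hmemS2 : ∀ x, x ∈ S₂ ↔ x = t ∨ x = a - t ∨ (x ∈ S ∧ x ≠ a) := by
      intro x
      rw [hS2_def]
      simp only [Finset.mem_insert, Finset.mem_erase]
      tauto
    have hS2ne : S₂.Nonempty := ⟨t, Finset.mem_insert_self _ _⟩
    have h02 : 0 ∉ S₂ := by
      intro h
      rcases (hmemS2 0).1 h with h | h | h
      · omega
      · omega
      · exact h0 h.1
    have hsum2 : ∑ i ∈ S₂, i = ∑ i ∈ S, i := by
      have e1 : ∑ i ∈ S₂, i = t + ∑ i ∈ insert (a-t) (S.erase a), i := by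
        rw [hS2_def]; exact Finset.sum_insert ht_not
      have e2 : ∑ i ∈ insert (a-t) (S.erase a), i = (a-t) + ∑ i ∈ S.erase a, i :=
        Finset.sum_insert hat_not
      have e3 : (∑ i ∈ S.erase a, i) + a = ∑ i ∈ S, i := Finset.sum_erase_add _ _ haS
      omega
    have hcard2 : S.card + 1 = S₂.card := by
      have c0 : 1 ≤ S.card := Finset.card_pos.2 hne
      have c1 : S₂.card = (insert (a-t) (S.erase a)).card + 1 := by
        rw [hS2_def]; exact Finset.card_insert_of_notMem ht_not
      have c2 : (insert (a-t) (S.erase a)).card = (S.erase a).card + 1 :=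
        Finset.card_insert_of_notMem hat_not
      have c3 : (S.erase a).card = S.card - 1 := Finset.card_erase_of_mem haS
      omega
    have ha1S2 : a - 1 ∈ S₂ := by
      rcases Nat.eq_or_lt_of_le ht1 with h | h
      · exact (hmemS2 _).2 (Or.inr (Or.inl (by omega)))
      · have h1 : a - 1 ∈ S := htmem 1 (by omega)
        exact (hmemS2 _).2 (Or.inr (Or.inr ⟨h1, by omega⟩))
    have hmax2 : S₂.max' hS2ne = a - 1 := by
      refine le_antisymm (Finset.max'_le _ _ _ ?_) (Finset.le_max' _ _ ha1S2)
      intro x hx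
      rcases (hmemS2 x).1 hx with h | h | h
      · omega
      · omega
      · have := hmax _ h.1; omega
    have hsup2 : S₂.sup id = a - 1 := by rw [sup_id_eq_max' _ hS2ne, hmax2]
    have hmin2 : S₂.min' hS2ne = t := by
      refine le_antisymm (Finset.min'_le _ _ (Finset.mem_insert_self _ _)) ?_
      refine Finset.le_min' _ _ _ ?_
      intro x hx
      rcases (hmemS2 x).1 hx with h | h | h
      · omega
      · omega
      · have := hmin _ h.1; omega
    have hstair2 : t ≤ stair S₂ := by
      refine le_stair hsup2 h02 ?_
      intro i hi
      rcases Nat.eq_or_lt_of_le (Nat.le_sub_one_of_lt hi) with h | h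
      · rw [show a - 1 - i = a - t by omega]
        exact (hmemS2 _).2 (Or.inr (Or.inl rfl))
      · have hx : a - 1 - i = a - (i+1) := by omega
        rw [hx]
        have hxS : a - (i+1) ∈ S := htmem (i+1) (by omega)
        exact (hmemS2 _).2 (Or.inr (Or.inr ⟨hxS, by omega⟩))
    have hfr : frank S = S₂ := by
      rw [frank_eq_case2 S hne (by rw [← hs_def, ← ht_def]; omega),
        ← ha_def, ← ht_def, ← hS2_def]
    have hfr2 : frank S₂ = S := by
      rw [frank_eq_case1 S₂ hS2ne (by rw [hmin2]; exact hstair2), hmin2, hmax2,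
        show a - 1 + 1 = a by omega, hS2_def, Finset.erase_insert ht_not,
        Finset.erase_insert hat_not, Finset.insert_erase haS]
    rw [hfr]
    exact ⟨h02, hsum2, Or.inr hcard2, hfr2⟩

end Franklin

open Franklin

/-- One step of Franklin's involution at the level of partitions. -/
noncomputable def franklinP (m : ℕ) (l : Nat.Partition m) : Nat.Partition m :=
  if h : (0 ∉ frank l.parts.toFinset) ∧ (frank l.parts.toFinset).val.sum = m then
    ⟨(frank l.parts.toFinset).val,
      fun {i} hi => Nat.pos_of_ne_zero (fun e => h.1 (Finset.mem_def.2 (e ▸ hi))),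
      h.2⟩
  else l

lemma key_count (m : ℕ) (hm : 1 ≤ m) (hsq : ¬ ∃ x : ℕ, x ^ 2 = 24 * m + 1) :
    ((Nat.Partition.distincts m).filter (fun l => Even l.parts.card)).card =
    ((Nat.Partition.distincts m).filter (fun l => ¬ Even l.parts.card)).card := by
  have main : ∀ l ∈ Nat.Partition.distincts m,
      (franklinP m l) ∈ Nat.Partition.distincts m ∧
      ((franklinP m l).parts.card % 2 ≠ l.parts.card % 2) ∧
      franklinP m (franklinP m l) = l := by
    intro l hl
    have hnodup : l.parts.Nodup := by
      simpa [Nat.Partition.distincts, Finset.mem_filter] using hl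
    set S := l.parts.toFinset with hS
    have hval : S.val = l.parts := by
      rw [hS, Multiset.toFinset_val]
      exact Multiset.dedup_eq_self.2 hnodup
    have h0S : 0 ∉ S := fun h => by
      have := l.parts_pos (hval ▸ Finset.mem_def.1 h)
      omega
    have hsum : ∑ i ∈ S, i = m := by rw [← sum_val, hval, l.parts_sum]
    have hSne : S.Nonempty := by
      rcases Finset.eq_empty_or_nonempty S with h | h
      · exfalso; rw [h] at hsum; simp at hsum; omega
      · exact h
    obtain ⟨h0', hsum', hcard', hinv'⟩ := frank_spec S hSne h0S (by rwa [hsum])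
    have hcond : (0 ∉ frank S) ∧ (frank S).val.sum = m := ⟨h0', by rw [sum_val, hsum', hsum]⟩
    have hfp : franklinP m l = ⟨(frank S).val,
        fun {i} hi => Nat.pos_of_ne_zero (fun e => hcond.1 (Finset.mem_def.2 (e ▸ hi))),
        hcond.2⟩ := by
      rw [franklinP, dif_pos hcond]
    have hl'parts : (franklinP m l).parts = (frank S).val := by rw [hfp]
    have hS' : (franklinP m l).parts.toFinset = frank S := by
      rw [hl'parts, Finset.val_toFinset]
    have hl'mem : (franklinP m l) ∈ Nat.Partition.distincts m := by
      simp only [Nat.Partition.distincts, Finset.mem_filter, Finset.mem_univ, true_and]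
      rw [hl'parts]
      exact (frank S).nodup
    refine ⟨hl'mem, ?_, ?_⟩
    · have hc1 : (franklinP m l).parts.card = (frank S).card := by rw [hl'parts]; rfl
      have hc2 : l.parts.card = S.card := by rw [← hval]; rfl
      rw [hc1, hc2]
      omega
    · have hcond2 : (0 ∉ frank (franklinP m l).parts.toFinset) ∧
          (frank (franklinP m l).parts.toFinset).val.sum = m := by
        rw [hS', hinv']
        exact ⟨h0S, by rw [hval]; exact l.parts_sum⟩
      have hfp2 : franklinP m (franklinP m l) = ⟨(frank (franklinP m l).parts.toFinset).val,
          fun {i} hi => Nat.pos_of_ne_zero (fun e => hcond2.1 (Finset.mem_def.2 (e ▸ hi))),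
          hcond2.2⟩ := by
        rw [franklinP, dif_pos hcond2]
      rw [hfp2]
      apply Nat.Partition.ext
      simp only
      rw [hS', hinv', hval]
  refine Finset.card_bij' (fun l _ => franklinP m l) (fun l _ => franklinP m l) ?_ ?_ ?_ ?_
  · intro l hl
    rw [Finset.mem_filter] at hl
    obtain ⟨hl1, hl2⟩ := hl
    obtain ⟨hmem, hpar, -⟩ := main l hl1
    rw [Finset.mem_filter]
    refine ⟨hmem, ?_⟩
    rw [Nat.even_iff] at hl2 ⊢
    omega
  · intro l hl
    rw [Finset.mem_filter] at hl
    obtain ⟨hl1, hl2⟩ := hl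
    obtain ⟨hmem, hpar, -⟩ := main l hl1
    rw [Finset.mem_filter]
    refine ⟨hmem, ?_⟩
    rw [Nat.even_iff] at hl2 ⊢
    omega
  · intro l hl
    rw [Finset.mem_filter] at hl
    exact (main l hl.1).2.2
  · intro l hl
    rw [Finset.mem_filter] at hl
    exact (main l hl.1).2.2

/-- Number of irreducible spin characters of the double cover of `A(n)`. -/
noncomputable def fAhat (n : ℕ) : ℕ :=
  2 * ((Nat.Partition.distincts n).filter (fun l => Even (n - l.parts.card))).card
    + ((Nat.Partition.distincts n).filter (fun l => ¬ Even (n - l.parts.card))).card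

theorem spchar_hatA_mod3_family (p : ℕ) (hp : p.Prime) (hp5 : 5 ≤ p)
    (r : ℕ) (hr1 : 1 ≤ r) (hr2 : r ≤ p - 1)
    (hnr : ¬ ∃ x : ZMod p, x ^ 2 = ((24 * r + 1 : ℕ) : ZMod p)) (n : ℕ) :
    fAhat (p * n + r) % 3 = 0 := by
  set m := p * n + r with hm_def
  have hm1 : 1 ≤ m := by omega
  have hsq : ¬ ∃ x : ℕ, x ^ 2 = 24 * m + 1 := by
    rintro ⟨x, hx⟩
    apply hnr
    refine ⟨(x : ZMod p), ?_⟩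
    have h1 : ((x ^ 2 : ℕ) : ZMod p) = ((24 * m + 1 : ℕ) : ZMod p) := by rw [hx]
    have h2 : (24 * m + 1 : ℕ) = 24 * n * p + (24 * r + 1) := by rw [hm_def]; ring
    rw [h2] at h1
    push_cast at h1 ⊢
    rw [ZMod.natCast_self] at h1
    rw [h1]
    ring
  have hcount := key_count m hm1 hsq
  have hle : ∀ l ∈ Nat.Partition.distincts m, l.parts.card ≤ m := by
    intro l _
    have h := Multiset.card_nsmul_le_sum (s := l.parts) (a := 1) (fun x hx => l.parts_pos hx)
    rw [l.parts_sum] at h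
    simpa using h
  unfold fAhat
  by_cases hm : Even m
  · have e1 : (Nat.Partition.distincts m).filter (fun l => Even (m - l.parts.card))
        = (Nat.Partition.distincts m).filter (fun l => Even l.parts.card) := by
      apply Finset.filter_congr
      intro l hl
      rw [Nat.even_sub (hle l hl)]
      simp [hm]
    have e2 : (Nat.Partition.distincts m).filter (fun l => ¬ Even (m - l.parts.card))
        = (Nat.Partition.distincts m).filter (fun l => ¬ Even l.parts.card) := by
      apply Finset.filter_congr
      intro l hl
      rw [Nat.even_sub (hle l hl)]
      simp [hm]
    rw [e1, e2, hcount]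
    omega
  · have e1 : (Nat.Partition.distincts m).filter (fun l => Even (m - l.parts.card))
        = (Nat.Partition.distincts m).filter (fun l => ¬ Even l.parts.card) := by
      apply Finset.filter_congr
      intro l hl
      rw [Nat.even_sub (hle l hl)]
      simp [hm]
    have e2 : (Nat.Partition.distincts m).filter (fun l => ¬ Even (m - l.parts.card))
        = (Nat.Partition.distincts m).filter (fun l => Even l.parts.card) := by
      apply Finset.filter_congr
      intro l hl
      rw [Nat.even_sub (hle l hl)]
      simp [hm]
    rw [e1, e2, ← hcount]
    omega
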